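/- The function x ↦ √(x²+2x) / ((1+x)·ln(1+x)) is strictly decreasing on (0, ∞). -/

import Mathlib

/-- x ↦ √(x²+2x)/((1+x)·ln(1+x)) is strictly decreasing on (0, ∞). -/
theorem stmt_18 :
    StrictAntiOn (fun x : ℝ => Real.sqrt (x ^ 2 + 2 * x) / ((1 + x) * Real.log (1 + x)))
      (Set.Ioi (0 : ℝ)) := by
  have key : ∀ x ∈ Set.Ioi (0:ℝ),
      HasDerivAt (fun x : ℝ => Real.sqrt (x ^ 2 + 2 * x) / ((1 + x) * Real.log (1 + x)))
        (((2*x+2)/(2*Real.sqrt (x^2+2*x)) * ((1+x)*Real.log (1+x)) -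
          Real.sqrt (x^2+2*x) * (Real.log (1+x) + 1)) / ((1+x)*Real.log (1+x))^2) x := by
    intro x hx
    have hx0 : 0 < x := hx
    have h1 : (0:ℝ) < 1 + x := by linarith
    have hq : 0 < x^2 + 2*x := by nlinarith
    have hL : 0 < Real.log (1+x) := Real.log_pos (by linarith)
    have hinner : HasDerivAt (fun x : ℝ => x^2 + 2*x) (2*x+2) x := by
      have h := (hasDerivAt_pow 2 x).add ((hasDerivAt_id x).const_mul 2)
      exact h.congr_deriv (by norm_num)
    have hg : HasDerivAt (fun x : ℝ => Real.sqrt (x ^ 2 + 2 * x))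
        ((2*x+2)/(2*Real.sqrt (x^2+2*x))) x := by
      have h := (Real.hasDerivAt_sqrt (ne_of_gt hq)).comp x hinner
      exact h.congr_deriv (by ring)
    have hlog : HasDerivAt (fun x : ℝ => Real.log (1+x)) (1/(1+x)) x := by
      have h := (Real.hasDerivAt_log (ne_of_gt h1)).comp x
        ((hasDerivAt_id x).const_add 1)
      exact h.congr_deriv (by ring)
    have hh : HasDerivAt (fun x : ℝ => (1+x) * Real.log (1+x))
        (Real.log (1+x) + 1) x := by
      have h := ((hasDerivAt_id x).const_add 1).mul hlog
      exact h.congr_deriv (by rw [id, mul_one_div_cancel h1.ne']; ring)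
    have hne : (1+x) * Real.log (1+x) ≠ 0 := by positivity
    exact hg.div hh hne
  have hderiv_neg : ∀ x ∈ Set.Ioi (0:ℝ),
      deriv (fun x : ℝ => Real.sqrt (x ^ 2 + 2 * x) / ((1 + x) * Real.log (1 + x))) x < 0 := by
    intro x hx
    rw [(key x hx).deriv]
    have hx0 : 0 < x := hx
    have h1 : (0:ℝ) < 1 + x := by linarith
    have hq : 0 < x^2 + 2*x := by nlinarith
    have hL : 0 < Real.log (1+x) := Real.log_pos (by linarith)
    have hLx : Real.log (1+x) < x := by
      have := Real.log_lt_sub_one_of_pos h1 (by linarith : (1:ℝ)+x ≠ 1)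
      linarith
    set s := Real.sqrt (x^2+2*x) with hs_def
    have hs : 0 < s := Real.sqrt_pos.2 hq
    have hs2 : s^2 = x^2+2*x := Real.sq_sqrt hq.le
    apply div_neg_of_neg_of_pos
    · have hmul : ((2*x+2)/(2*s) * ((1+x)*Real.log (1+x)) - s * (Real.log (1+x) + 1)) * (2*s)
          = (2*x+2)*((1+x)*Real.log (1+x)) - 2*s^2*(Real.log (1+x) + 1) := by
        field_simp
      nlinarith [hmul, hs2, hs, hL, hLx]
    · positivity
  have hcont : ContinuousOn (fun x : ℝ => Real.sqrt (x ^ 2 + 2 * x) / ((1 + x) * Real.log (1 + x)))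
      (Set.Ioi (0:ℝ)) := fun x hx => (key x hx).continuousAt.continuousWithinAt
  exact strictAntiOn_of_deriv_neg (convex_Ioi 0) hcont
    (by simpa [interior_Ioi] using hderiv_neg)
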